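/- Let β > 0, λ± = (1±√β)², and define F(z,β) = (√(1+λ⁻ z) − √(1+λ⁺ z))² for real z > −1/λ⁺. Then for the Marchenko–Pastur density f_β(λ) = √((λ−λ⁻)⁺(λ⁺−λ)⁺)/(2πβλ) plus atom (1−1/β)⁺ at 0, one has ∫₀^∞ (zλ)/(1+zλ) f_β(λ) dλ = F(z,β)/(4zβ) for z ≠ 0. -/

import Mathlib

open MeasureTheory Real Set

set_option maxHeartbeats 2000000 in
/-- Stieltjes-transform identity for the Marchenko–Pastur density: for `β > 0`,
`λ± = (1 ± √β)²`, `z > -1/λ⁺`, `z ≠ 0`, and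
`F(z,β) = (√(1 + λ⁻ z) - √(1 + λ⁺ z))²`, one has
`∫₀^∞ (zλ)/(1 + zλ) f_β(λ) dλ = F(z,β) / (4 z β)`. -/
theorem marchenkoPastur_stieltjes_identity (β z : ℝ) (hβ : 0 < β)
    (hz : -1 / (1 + Real.sqrt β) ^ 2 < z) (hz0 : z ≠ 0) :
    (∫ lam in Set.Ioi (0:ℝ), (z * lam) / (1 + z * lam) *
        (Real.sqrt (max (lam - (1 - Real.sqrt β) ^ 2) 0 *
            max ((1 + Real.sqrt β) ^ 2 - lam) 0)
          / (2 * Real.pi * β * lam)))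
      = (Real.sqrt (1 + (1 - Real.sqrt β) ^ 2 * z)
          - Real.sqrt (1 + (1 + Real.sqrt β) ^ 2 * z)) ^ 2 / (4 * z * β) := by
  have hπ : (0:ℝ) < Real.pi := Real.pi_pos
  set sb := Real.sqrt β with hsb
  have hsb0 : 0 < sb := Real.sqrt_pos.2 hβ
  set a := (1 - sb)^2 with ha
  set b := (1 + sb)^2 with hbdef
  have ha0 : (0:ℝ) ≤ a := sq_nonneg _
  have hb0 : (0:ℝ) < b := by nlinarith
  have hab : a < b := by nlinarith
  have hba : b - a ≠ 0 := by linarith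
  have hbz : 0 < 1 + b * z := by
    have := (div_lt_iff₀ hb0).mp hz
    linarith
  have haz : 0 < 1 + a * z := by
    rcases le_or_gt 0 z with h | h
    · nlinarith
    · nlinarith
  have hxz : ∀ x : ℝ, a ≤ x → x ≤ b → 0 < 1 + z * x := by
    intro x h1 h2
    rcases le_or_gt 0 z with h | h
    · nlinarith
    · nlinarith
  set m := (a+b)/2 with hm
  set r := (b-a)/2 with hr
  set k := m + 1/z with hk
  set t := Real.sqrt ((1+a*z)*(1+b*z)) with ht
  have hr0 : 0 < r := by rw [hr]; linarith
  have ht0 : 0 < t := Real.sqrt_pos.2 (mul_pos haz hbz)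
  have ht2 : t^2 = (1+a*z)*(1+b*z) := Real.sq_sqrt (mul_pos haz hbz).le
  set G : ℝ → ℝ := fun y => Real.sqrt ((y-a)*(b-y)) + k * Real.arcsin ((y-m)/r)
      - (t/z) * Real.arcsin ((r^2 + k*(y-m))/(r*(y-m+k))) with hG
  set h : ℝ → ℝ := fun x => z / (1+z*x) * Real.sqrt ((x-a)*(b-x)) with hh
  have hQne : ∀ y : ℝ, a ≤ y → y ≤ b → y - m + k ≠ 0 := by
    intro y h1 h2
    have hQ : y - m + k = (1+z*y)/z := by rw [hk]; field_simp; ring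
    rw [hQ]
    exact div_ne_zero (hxz y h1 h2).ne' hz0
  -- the derivative
  have hderiv : ∀ x ∈ Set.Ioo a b, HasDerivAt G (h x) x := by
    intro x hx
    obtain ⟨hax, hxb⟩ := hx
    simp only [hh]
    have h1x : 0 < 1 + z*x := hxz x hax.le hxb.le
    have h1xne : 1 + z*x ≠ 0 := h1x.ne'
    have hP : 0 < (x-a)*(b-x) := mul_pos (by linarith) (by linarith)
    set S := Real.sqrt ((x-a)*(b-x)) with hS
    have hS0 : 0 < S := Real.sqrt_pos.2 hP
    have hSS : S^2 = (x-a)*(b-x) := Real.sq_sqrt hP.le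
    have hQ : x - m + k = (1+z*x)/z := by rw [hk]; field_simp; ring
    have hQ0 : x - m + k ≠ 0 := hQne x hax.le hxb.le
    have hden0 : r * (x - m + k) ≠ 0 := mul_ne_zero hr0.ne' hQ0
    have hinner : HasDerivAt (fun y : ℝ => (y-a)*(b-y)) (1*(b-x) + (x-a)*(0-1)) x :=
      ((hasDerivAt_id x).sub_const a).mul ((hasDerivAt_const x b).sub (hasDerivAt_id x))
    have D1 : HasDerivAt (fun y => Real.sqrt ((y-a)*(b-y)))
        (1 / (2 * S) * (1*(b-x) + (x-a)*(0-1))) x :=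
      (Real.hasDerivAt_sqrt hP.ne').comp x hinner
    have hw1lt : (x - m)/r < 1 := (div_lt_one hr0).2 (by rw [hm, hr]; linarith)
    have hw1gt : -1 < (x - m)/r := by
      rw [lt_div_iff₀ hr0, hm, hr]; linarith
    have D2 : HasDerivAt (fun y => k * Real.arcsin ((y-m)/r))
        (k * (1 / Real.sqrt (1 - ((x-m)/r)^2) * (1/r))) x := by
      have hin : HasDerivAt (fun y : ℝ => (y-m)/r) (1/r) x := by
        simpa using ((hasDerivAt_id x).sub_const m).div_const r
      exact ((Real.hasDerivAt_arcsin hw1gt.ne' hw1lt.ne).comp x hin).const_mul k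
    have h1mw2 : 1 - ((r^2 + k*(x-m))/(r*(x-m+k)))^2
        = ((x-a)*(b-x)) * (t/(r*(1+z*x)))^2 := by
      rw [div_pow t, ht2, hQ, hk, hm, hr]
      field_simp
      ring
    have hw2sq : ((r^2 + k*(x-m))/(r*(x-m+k)))^2 < 1 := by
      have h2 : 0 < ((x-a)*(b-x)) * (t/(r*(1+z*x)))^2 := by positivity
      nlinarith [h1mw2]
    have hw2abs : |(r^2 + k*(x-m))/(r*(x-m+k))| < 1 := by
      rwa [← sq_lt_one_iff_abs_lt_one]
    have D3 : HasDerivAt (fun y => (t/z) * Real.arcsin ((r^2 + k*(y-m))/(r*(y-m+k))))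
        ((t/z) * (1 / Real.sqrt (1 - ((r^2 + k*(x-m))/(r*(x-m+k)))^2)
          * (((0 + k*1) * (r*(x-m+k)) - (r^2 + k*(x-m)) * (r*1)) / (r*(x-m+k))^2))) x := by
      have hnum : HasDerivAt (fun y : ℝ => r^2 + k*(y-m)) (0 + k*1) x :=
        (hasDerivAt_const x (r^2)).add (((hasDerivAt_id x).sub_const m).const_mul k)
      have hden : HasDerivAt (fun y : ℝ => r*(y-m+k)) (r*1) x :=
        (((hasDerivAt_id x).sub_const m).add_const k).const_mul r
      have hw := hnum.div hden hden0
      have habs := abs_lt.1 hw2abs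
      exact ((Real.hasDerivAt_arcsin habs.1.ne' habs.2.ne).comp x hw).const_mul (t/z)
    have DG := (D1.add D2).sub D3
    have hs1 : Real.sqrt (1 - ((x-m)/r)^2) = S * (1/r) := by
      have e : 1 - ((x-m)/r)^2 = ((x-a)*(b-x)) * (1/r)^2 := by
        rw [hm, hr]; field_simp; ring
      rw [e, Real.sqrt_mul hP.le, Real.sqrt_sq (by positivity)]
    have hs2 : Real.sqrt (1 - ((r^2 + k*(x-m))/(r*(x-m+k)))^2) = S * (t/(r*(1+z*x))) := by
      rw [h1mw2, Real.sqrt_mul hP.le, Real.sqrt_sq (by positivity)]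
    rw [hs1, hs2] at DG
    have e1 : 1/(2*S) = S/(2*((x-a)*(b-x))) := by
      rw [div_eq_div_iff (by positivity) (by positivity)]
      linear_combination (-2 : ℝ) * hSS
    have e2 : 1/(S*(1/r)) = r*S/((x-a)*(b-x)) := by
      rw [div_eq_div_iff (by positivity) (by positivity)]
      field_simp
      linear_combination (-1 : ℝ) * hSS
    have e3 : 1/(S*(t/(r*(1+z*x)))) = r*(1+z*x)*S/(((x-a)*(b-x))*t) := by
      rw [div_eq_div_iff (by positivity) (by positivity)]
      field_simp
      rw [mul_div_cancel_left₀ _ (by intro h0; apply h1xne; linarith)]; exact hSS.symm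
    rw [e1, e2, e3] at DG
    have hED : (S/(2*((x-a)*(b-x))) * (1*(b-x) + (x-a)*(0-1)) + k * (r*S/((x-a)*(b-x)) * (1/r))
        - (t/z) * (r*(1+z*x)*S/(((x-a)*(b-x))*t)
          * (((0 + k*1) * (r*(x-m+k)) - (r^2 + k*(x-m)) * (r*1)) / (r*(x-m+k))^2)))
        = z / (1+z*x) * S := by
      rw [hQ, hk, hm, hr]
      have hxa : x - a ≠ 0 := by linarith
      have hbx : b - x ≠ 0 := by linarith
      have h1xne2 : 1 + x*z ≠ 0 := by intro h0; apply h1xne; linarith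
      field_simp
      ring
    exact hED ▸ DG
  -- continuity of G
  have hGcont : ContinuousOn G (Set.Icc a b) := by
    apply ContinuousOn.sub
    · apply ContinuousOn.add
      · exact (Real.continuous_sqrt.comp (by continuity)).continuousOn
      · exact continuousOn_const.mul ((Real.continuous_arcsin.comp (by continuity)).continuousOn)
    · apply ContinuousOn.mul continuousOn_const
      apply Real.continuous_arcsin.comp_continuousOn
      apply ContinuousOn.div (by fun_prop) (by fun_prop)
      intro y hy
      exact mul_ne_zero hr0.ne' (hQne y hy.1 hy.2)
  -- integrability of h
  have hhcont : ContinuousOn h (Set.uIcc a b) := by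
    apply ContinuousOn.mul
    · apply ContinuousOn.div continuousOn_const (by fun_prop)
      intro y hy
      rw [Set.uIcc_of_le hab.le] at hy
      exact (hxz y hy.1 hy.2).ne'
    · exact (Real.continuous_sqrt.comp (by continuity)).continuousOn
  have hhint : IntervalIntegrable h volume a b := hhcont.intervalIntegrable
  -- FTC
  have hFTC : ∫ y in a..b, h y = G b - G a :=
    intervalIntegral.integral_eq_sub_of_hasDeriv_right_of_le hab.le hGcont
      (fun x hx => (hderiv x hx).hasDerivWithinAt) hhint
  -- endpoint values
  have hGb : G b = k * (Real.pi/2) - (t/z) * (Real.pi/2) := by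
    rw [hG]
    have e0 : (b-a)*(b-b) = 0 := by ring
    have e1 : (b - m)/r = 1 := by rw [hm, hr]; field_simp; ring
    have e2 : (r^2 + k*(b-m))/(r*(b-m+k)) = 1 := by
      rw [div_eq_one_iff_eq (mul_ne_zero hr0.ne' (hQne b hab.le le_rfl))]
      have : b - m = r := by rw [hm, hr]; ring
      rw [this]; ring
    simp only [e0, e1, e2, Real.sqrt_zero, Real.arcsin_one]
    ring
  have hGa : G a = k * (-(Real.pi/2)) - (t/z) * (-(Real.pi/2)) := by
    rw [hG]
    have e0 : (a-a)*(b-a) = 0 := by ring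
    have e1 : (a - m)/r = -1 := by rw [hm, hr]; field_simp; ring
    have e2 : (r^2 + k*(a-m))/(r*(a-m+k)) = -1 := by
      rw [div_eq_iff (mul_ne_zero hr0.ne' (hQne a le_rfl hab.le))]
      have : a - m = -r := by rw [hm, hr]; ring
      rw [this]; ring
    simp only [e0, e1, e2, Real.sqrt_zero, Real.arcsin_neg_one, Real.arcsin_one]
    ring
  -- reduce the Ioi integral to the interval integral
  set f : ℝ → ℝ := fun lam => (z * lam) / (1 + z * lam) *
      (Real.sqrt (max (lam - a) 0 * max (b - lam) 0) / (2 * Real.pi * β * lam)) with hf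
  have step1 : (∫ lam in Set.Ioi (0:ℝ), f lam) = ∫ lam in Set.Ioc a b, f lam := by
    have e1 : ∀ x ∈ Set.Ioi (0:ℝ), f x = (Set.Ioc a b).indicator f x := by
      intro x hx
      by_cases hmem : x ∈ Set.Ioc a b
      · rw [Set.indicator_of_mem hmem]
      · rw [Set.indicator_of_notMem hmem]
        rw [Set.mem_Ioc] at hmem
        push_neg at hmem
        rcases le_or_gt x a with hxa | hxa
        · have : max (x - a) 0 = 0 := max_eq_right (by linarith)
          rw [hf]; simp [this]
        · have : max (b - x) 0 = 0 := max_eq_right (by linarith [hmem hxa])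
          rw [hf]; simp [this]
    have hsub : Set.Ioc a b ⊆ Set.Ioi (0:ℝ) := fun y hy => lt_of_le_of_lt ha0 hy.1
    rw [setIntegral_congr_fun measurableSet_Ioi e1,
      setIntegral_indicator measurableSet_Ioc,
      Set.inter_eq_self_of_subset_right hsub]
  have step2 : (∫ lam in Set.Ioc a b, f lam) = ∫ lam in Set.Ioo a b, f lam :=
    integral_Ioc_eq_integral_Ioo
  have step3 : (∫ lam in Set.Ioo a b, f lam)
      = ∫ lam in Set.Ioo a b, (2 * Real.pi * β)⁻¹ * h lam := by
    apply setIntegral_congr_fun measurableSet_Ioo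
    intro x hx
    have hx0 : 0 < x := lt_of_le_of_lt ha0 hx.1
    have h1x : 0 < 1 + z*x := hxz x hx.1.le hx.2.le
    have e1 : max (x - a) 0 = x - a := max_eq_left (by linarith [hx.1])
    have e2 : max (b - x) 0 = b - x := max_eq_left (by linarith [hx.2])
    rw [hf, hh]
    simp only [e1, e2]
    field_simp
  have step4 : (∫ lam in Set.Ioo a b, (2 * Real.pi * β)⁻¹ * h lam)
      = (2 * Real.pi * β)⁻¹ * ∫ lam in Set.Ioo a b, h lam := integral_const_mul _ _
  have step5 : (∫ lam in Set.Ioo a b, h lam) = ∫ y in a..b, h y := by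
    rw [intervalIntegral.integral_of_le hab.le, integral_Ioc_eq_integral_Ioo]
  rw [step1, step2, step3, step4, step5, hFTC, hGb, hGa]
  -- final algebra
  have hsum : (Real.sqrt (1 + a*z) - Real.sqrt (1 + b*z))^2 = (1 + a*z) + (1 + b*z) - 2*t := by
    rw [sub_sq, Real.sq_sqrt (by linarith : (0:ℝ) ≤ 1 + a*z),
      Real.sq_sqrt (by linarith : (0:ℝ) ≤ 1 + b*z), ht,
      Real.sqrt_mul (by linarith : (0:ℝ) ≤ 1 + a*z)]
    ring
  have hgoal1 : (1 : ℝ) + a * z = 1 + (1 - sb)^2 * z := by rw [ha]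
  have hgoal2 : (1 : ℝ) + b * z = 1 + (1 + sb)^2 * z := by rw [hbdef]
  rw [show (1 + (1 - sb)^2 * z) = 1 + a*z from rfl, show (1 + (1 + sb)^2 * z) = 1 + b*z from rfl,
    hsum, hk, hm]
  field_simp
  ring
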